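/- Under the hypotheses of the trajectory-convergence lemma, the discretized trajectories converge pointwise: for every t ≥ 0, s_δt^{⌊t/δt⌋} → s_t as δt → 0. -/

import Mathlib

open Real Filter

/-- Mean-value bound: a function with derivative bounded by `M` on `[0,∞)` is `M`-Lipschitz
there. -/
lemma fadp_norm_sub_le_of_deriv {E : Type*} [NormedAddCommGroup E] [NormedSpace ℝ E]
    {g G : ℝ → E} {M : ℝ}
    (hg : ∀ t : ℝ, 0 ≤ t → HasDerivAt g (G t) t)
    (hGM : ∀ t : ℝ, 0 ≤ t → ‖G t‖ ≤ M)
    {a b : ℝ} (ha : 0 ≤ a) (hab : a ≤ b) :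
    ‖g b - g a‖ ≤ M * (b - a) := by
  have h := (convex_Ici (0 : ℝ)).norm_image_sub_le_of_norm_hasDerivWithin_le
    (f := g) (f' := G) (C := M)
    (fun x hx => (hg x hx).hasDerivWithinAt) (fun x hx => hGM x hx)
    (Set.mem_Ici.mpr ha) (Set.mem_Ici.mpr (ha.trans hab))
  calc ‖g b - g a‖ ≤ M * ‖b - a‖ := h
    _ = M * (b - a) := by rw [Real.norm_eq_abs, abs_of_nonneg (by linarith)]

/-- Convergence (with explicit error bound) of the frozen-action Euler-type discretization
of a controlled ODE to the continuous-time trajectory. -/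
theorem frozen_action_discretization_pointwise
    {n : ℕ} {A : Type*} (F : EuclideanSpace ℝ (Fin n) → A → EuclideanSpace ℝ (Fin n))
    (pol : EuclideanSpace ℝ (Fin n) → A) (K M : ℝ) (hK : 0 < K) (hM : 0 < M)
    (hFbound : ∀ s a, ‖F s a‖ ≤ M)
    (hFlip : ∀ a, LipschitzWith (Real.toNNReal K) (fun s => F s a))
    (hFpollip : LipschitzWith (Real.toNNReal K) (fun s => F s (pol s)))
    (s₀ : EuclideanSpace ℝ (Fin n))
    (s : ℝ → EuclideanSpace ℝ (Fin n)) (hs0 : s 0 = s₀)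
    (hs : ∀ t : ℝ, 0 ≤ t → HasDerivAt s (F (s t) (pol (s t))) t)
    (sd : ℝ → ℕ → EuclideanSpace ℝ (Fin n))
    (hsd0 : ∀ δt : ℝ, 0 < δt → sd δt 0 = s₀)
    (hsd : ∀ δt : ℝ, 0 < δt → ∀ k : ℕ,
      ∃ u : ℝ → EuclideanSpace ℝ (Fin n), u 0 = sd δt k ∧
        (∀ t : ℝ, 0 ≤ t → HasDerivAt u (F (u t) (pol (sd δt k))) t) ∧
        sd δt (k + 1) = u δt) :
    ∀ t : ℝ, 0 ≤ t →
      Tendsto (fun δt : ℝ => sd δt ⌊t / δt⌋₊) (nhdsWithin 0 (Set.Ioi 0)) (nhds (s t)) := by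
  intro t ht
  have hKcoe : ((Real.toNNReal K : NNReal) : ℝ) = K := Real.coe_toNNReal K hK.le
  -- main estimate for a fixed δt > 0
  have main : ∀ δt : ℝ, 0 < δt →
      ‖sd δt ⌊t / δt⌋₊ - s t‖ ≤ (2 * M * Real.exp (K * t) + M) * δt := by
    intro δt hδt
    -- discrete Grönwall estimate (by induction on k)
    have key : ∀ k : ℕ, ‖sd δt k - s (k * δt)‖ ≤ 2 * M * δt * (Real.exp (K * (δt * k)) - 1) := by
      intro k
      induction k with
      | zero => simp [hsd0 δt hδt, hs0]
      | succ k ih =>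
        obtain ⟨u, hu0, hu, hu1⟩ := hsd δt hδt k
        have hkδ : (0 : ℝ) ≤ k * δt := by positivity
        set f : ℝ → EuclideanSpace ℝ (Fin n) := fun x => s (k * δt + x) - u x with hf
        set f' : ℝ → EuclideanSpace ℝ (Fin n) := fun x =>
          F (s (k * δt + x)) (pol (s (k * δt + x))) - F (u x) (pol (sd δt k)) with hf'
        have hderivAt : ∀ x : ℝ, 0 ≤ x → HasDerivAt f (f' x) x := by
          intro x hx
          have h1 : HasDerivAt (fun y : ℝ => s (k * δt + y))
              (F (s (k * δt + x)) (pol (s (k * δt + x)))) x := by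
            have := (hs (k * δt + x) (by linarith)).scomp x
              ((hasDerivAt_id x).const_add (k * δt : ℝ))
            simpa [Function.comp_def] using this
          exact h1.sub (hu x hx)
        have hcont : ContinuousOn f (Set.Icc 0 δt) := fun x hx =>
          ((hderivAt x hx.1).continuousAt).continuousWithinAt
        have hinit : ‖f 0‖ ≤ ‖sd δt k - s (k * δt)‖ := by
          simp [hf, hu0, norm_sub_rev]
        have hbound : ∀ x ∈ Set.Ico (0 : ℝ) δt, ‖f' x‖ ≤ K * ‖f x‖ + 2 * K * M * δt := by
          intro x hx
          obtain ⟨hx0, hxδ⟩ := hx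
          have huMx : ‖u x - u 0‖ ≤ M * (x - 0) :=
            fadp_norm_sub_le_of_deriv hu (fun τ hτ => hFbound _ _) le_rfl hx0
          have huM : ‖u x - u 0‖ ≤ M * δt := by
            refine huMx.trans ?_
            have : M * (x - 0) ≤ M * δt := by nlinarith
            linarith
          -- first piece: Lipschitz of the closed-loop field
          have h1 : ‖F (s (k * δt + x)) (pol (s (k * δt + x))) -
              F (sd δt k) (pol (sd δt k))‖ ≤ K * ‖s (k * δt + x) - sd δt k‖ := by
            have := hFpollip.dist_le_mul (s (k * δt + x)) (sd δt k)
            rw [hKcoe] at this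
            simpa [dist_eq_norm] using this
          -- second piece: Lipschitz in the state for fixed action
          have h2 : ‖F (sd δt k) (pol (sd δt k)) - F (u x) (pol (sd δt k))‖ ≤
              K * ‖sd δt k - u x‖ := by
            have := (hFlip (pol (sd δt k))).dist_le_mul (sd δt k) (u x)
            rw [hKcoe] at this
            simpa [dist_eq_norm] using this
          have hsplit : ‖f' x‖ ≤ ‖F (s (k * δt + x)) (pol (s (k * δt + x))) -
              F (sd δt k) (pol (sd δt k))‖ +
              ‖F (sd δt k) (pol (sd δt k)) - F (u x) (pol (sd δt k))‖ := by
            simpa [hf'] using norm_sub_le_norm_sub_add_norm_sub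
              (F (s (k * δt + x)) (pol (s (k * δt + x)))) (F (sd δt k) (pol (sd δt k)))
              (F (u x) (pol (sd δt k)))
          have hd1 : ‖s (k * δt + x) - sd δt k‖ ≤ ‖f x‖ + M * δt := by
            calc ‖s (k * δt + x) - sd δt k‖
                ≤ ‖s (k * δt + x) - u x‖ + ‖u x - sd δt k‖ :=
                  norm_sub_le_norm_sub_add_norm_sub _ _ _
              _ ≤ ‖f x‖ + M * δt := by
                  have : ‖u x - sd δt k‖ = ‖u x - u 0‖ := by rw [hu0]
                  rw [this]; exact add_le_add le_rfl huM
          have hd2 : ‖sd δt k - u x‖ ≤ M * δt := by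
            rw [← hu0, norm_sub_rev]; exact huM
          calc ‖f' x‖ ≤ K * ‖s (k * δt + x) - sd δt k‖ + K * ‖sd δt k - u x‖ := by
                refine hsplit.trans (add_le_add h1 h2)
            _ ≤ K * (‖f x‖ + M * δt) + K * (M * δt) := by
                refine add_le_add ?_ ?_ <;> exact mul_le_mul_of_nonneg_left (by assumption) hK.le
            _ = K * ‖f x‖ + 2 * K * M * δt := by ring
        have hgron := norm_le_gronwallBound_of_norm_deriv_right_le hcont
          (fun x hx => (hderivAt x hx.1).hasDerivWithinAt) hinit hbound δt
          ⟨hδt.le, le_rfl⟩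
        rw [gronwallBound_of_K_ne_0 hK.ne'] at hgron
        have hfδt : f δt = s ((k + 1 : ℕ) * δt) - sd δt (k + 1) := by
          rw [hu1]; show s (k * δt + δt) - u δt = _; congr 2; push_cast; ring
        have hE : ‖sd δt (k + 1) - s ((k + 1 : ℕ) * δt)‖ = ‖f δt‖ := by
          rw [hfδt, norm_sub_rev]
        rw [hE]
        have hdiv : 2 * K * M * δt / K = 2 * M * δt := by field_simp
        have hX : Real.exp (K * (δt * k)) > 0 := Real.exp_pos _
        have hY : Real.exp (K * δt) > 0 := Real.exp_pos _
        have hXY : Real.exp (K * (δt * (k + 1 : ℕ))) =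
            Real.exp (K * (δt * k)) * Real.exp (K * δt) := by
          rw [← Real.exp_add]; congr 1; push_cast; ring
        have hgron' : ‖f δt‖ ≤ ‖sd δt k - s (k * δt)‖ * Real.exp (K * δt) +
            2 * M * δt * (Real.exp (K * δt) - 1) := by
          have := hgron
          simp only [sub_zero] at this
          rw [hdiv] at this
          exact this
        have hY1 : (1 : ℝ) ≤ Real.exp (K * δt) := by
          have : (0:ℝ) ≤ K * δt := by positivity
          simpa using Real.one_le_exp this
        calc ‖f δt‖ ≤ ‖sd δt k - s (k * δt)‖ * Real.exp (K * δt) +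
              2 * M * δt * (Real.exp (K * δt) - 1) := hgron'
          _ ≤ 2 * M * δt * (Real.exp (K * (δt * k)) - 1) * Real.exp (K * δt) +
              2 * M * δt * (Real.exp (K * δt) - 1) := by
              refine add_le_add (mul_le_mul_of_nonneg_right ih hY.le) le_rfl
          _ = 2 * M * δt * (Real.exp (K * (δt * (k + 1 : ℕ))) - 1) := by
              rw [hXY]; ring
        done
    -- now compare with the continuous trajectory at time t
    set k := ⌊t / δt⌋₊ with hk
    have hkle : (k : ℝ) * δt ≤ t := by
      have := Nat.floor_le (div_nonneg ht hδt.le)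
      calc (k : ℝ) * δt ≤ (t / δt) * δt := by
            exact mul_le_mul_of_nonneg_right this hδt.le
        _ = t := by field_simp
    have hlt : t - (k : ℝ) * δt ≤ δt := by
      have h1 : t / δt < (k : ℝ) + 1 := Nat.lt_floor_add_one _
      have := (div_lt_iff₀ hδt).mp h1
      nlinarith
    have h1 : ‖sd δt k - s ((k : ℝ) * δt)‖ ≤ 2 * M * δt * Real.exp (K * t) := by
      refine (key k).trans ?_
      have hle : Real.exp (K * (δt * k)) - 1 ≤ Real.exp (K * t) := by
        have : Real.exp (K * (δt * k)) ≤ Real.exp (K * t) := by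
          apply Real.exp_le_exp.mpr
          have : δt * (k : ℝ) ≤ t := by rw [mul_comm]; exact hkle
          nlinarith
        linarith
      have : (0:ℝ) ≤ 2 * M * δt := by positivity
      nlinarith
    have h2 : ‖s ((k : ℝ) * δt) - s t‖ ≤ M * δt := by
      have := fadp_norm_sub_le_of_deriv hs (fun τ hτ => hFbound _ _)
        (a := (k : ℝ) * δt) (b := t) (by positivity) hkle
      rw [norm_sub_rev]
      refine this.trans ?_
      have : M * (t - (k : ℝ) * δt) ≤ M * δt := by nlinarith
      linarith
    calc ‖sd δt k - s t‖ ≤ ‖sd δt k - s ((k : ℝ) * δt)‖ + ‖s ((k : ℝ) * δt) - s t‖ :=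
          norm_sub_le_norm_sub_add_norm_sub _ _ _
      _ ≤ 2 * M * δt * Real.exp (K * t) + M * δt := add_le_add h1 h2
      _ = (2 * M * Real.exp (K * t) + M) * δt := by ring
  -- squeeze to conclude
  rw [tendsto_iff_norm_sub_tendsto_zero]
  apply squeeze_zero' (g := fun δt : ℝ => (2 * M * Real.exp (K * t) + M) * δt)
  · exact Eventually.of_forall fun _ => norm_nonneg _
  · filter_upwards [self_mem_nhdsWithin] with δt hδt
    exact main δt hδt
  · have : Tendsto (fun δt : ℝ => (2 * M * Real.exp (K * t) + M) * δt)
        (nhds 0) (nhds ((2 * M * Real.exp (K * t) + M) * 0)) :=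
      (continuous_const.mul continuous_id).tendsto 0
    simpa using this.mono_left nhdsWithin_le_nhds
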